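/- arXiv:1604.06039 — 6 statements merged into one kernel-verified Lean document; each statement's English description precedes it below -/
import Mathlib

section
/- Let $n \geq 3$, $R > 0$, and let $w$ be a positive function on $\bar B_R(0) \subset \mathbb{R}^n$ satisfying $|\ln w(y) - \ln w(z)| \leq L|y-z|$ for all $y, z \in \bar B_R(0)$, for some $L > 0$. Set $\underline{\lambda} = \min(\frac{n-2}{2L}, \frac{R}{2})$. Then for every $0 < \lambda < \underline{\lambda}$ and every $y$ with $\lambda \leq |y| < \underline{\lambda}$, one has $w_\lambda(y) := \frac{\lambda^{n-2}}{|y|^{n-2}} w\big(\frac{\lambda^2 y}{|y|^2}\big) \leq w(y)$. -/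
open Metric Set

/-- starting point for the method of moving spheres for log-Lipschitz
positive functions: for `λ < min((n-2)/(2L), R/2)`, the Kelvin transform `w_λ`
lies below `w` on `B_{λ̲} \ B_λ`. -/
theorem moving_spheres_start (n : ℕ) (hn : 3 ≤ n) (R L : ℝ) (hR : 0 < R) (hL : 0 < L)
    (w : EuclideanSpace ℝ (Fin n) → ℝ)
    (hpos : ∀ y ∈ closedBall (0 : EuclideanSpace ℝ (Fin n)) R, 0 < w y)
    (hlip : ∀ y ∈ closedBall (0 : EuclideanSpace ℝ (Fin n)) R,
      ∀ z ∈ closedBall (0 : EuclideanSpace ℝ (Fin n)) R,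
        |Real.log (w y) - Real.log (w z)| ≤ L * ‖y - z‖) :
    ∀ lam : ℝ, 0 < lam → lam < min (((n : ℝ) - 2) / (2 * L)) (R / 2) →
      ∀ y : EuclideanSpace ℝ (Fin n), lam ≤ ‖y‖ →
        ‖y‖ < min (((n : ℝ) - 2) / (2 * L)) (R / 2) →
          (lam ^ (n - 2) / ‖y‖ ^ (n - 2)) * w ((lam ^ 2 / ‖y‖ ^ 2) • y) ≤ w y := by
  intro lam hlam hlamlt y hy1 hy2
  set r := ‖y‖ with hrdef
  have hr0 : 0 < r := lt_of_lt_of_le hlam hy1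
  have hrn : r < ((n : ℝ) - 2) / (2 * L) := lt_of_lt_of_le hy2 (min_le_left _ _)
  have hrR : r < R := by
    have := lt_of_lt_of_le hy2 (min_le_right _ _); linarith
  have hyB : y ∈ closedBall (0 : EuclideanSpace ℝ (Fin n)) R := by
    rw [mem_closedBall, dist_zero_right]; exact hrR.le
  set c := lam ^ 2 / r ^ 2 with hc
  have hc0 : 0 < c := by positivity
  have hc1 : c ≤ 1 := by
    rw [hc, div_le_one (by positivity)]
    exact pow_le_pow_left₀ hlam.le hy1 2
  have hnz : ‖c • y‖ = c * r := by
    rw [norm_smul, Real.norm_eq_abs, abs_of_pos hc0]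
  have hzB : c • y ∈ closedBall (0 : EuclideanSpace ℝ (Fin n)) R := by
    rw [mem_closedBall, dist_zero_right, hnz]
    nlinarith
  have hwz : 0 < w (c • y) := hpos _ hzB
  have hwy : 0 < w y := hpos y hyB
  have hnorm : ‖c • y - y‖ = r - c * r := by
    have h1 : c • y - y = (c - 1) • y := by rw [sub_smul, one_smul]
    rw [h1, norm_smul, Real.norm_eq_abs, abs_of_nonpos (by linarith)]
    ring
  have key : Real.log (w (c • y)) - Real.log (w y) ≤ L * (r - c * r) := by
    calc Real.log (w (c • y)) - Real.log (w y)
        ≤ |Real.log (w (c • y)) - Real.log (w y)| := le_abs_self _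
      _ ≤ L * ‖c • y - y‖ := hlip _ hzB y hyB
      _ = L * (r - c * r) := by rw [hnorm]
  have hwzle : w (c • y) ≤ w y * Real.exp (L * (r - c * r)) := by
    calc w (c • y) = Real.exp (Real.log (w (c • y))) := (Real.exp_log hwz).symm
      _ ≤ Real.exp (Real.log (w y) + L * (r - c * r)) :=
          Real.exp_le_exp.mpr (by linarith)
      _ = w y * Real.exp (L * (r - c * r)) := by
          rw [Real.exp_add, Real.exp_log hwy]
  set m : ℕ := n - 2 with hm
  have hmR : (m : ℝ) = (n : ℝ) - 2 := by
    rw [hm, Nat.cast_sub (by omega)]; norm_num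
  have hF : lam ^ m / r ^ m = Real.exp ((m : ℝ) * Real.log (lam / r)) := by
    rw [← div_pow, ← Real.log_pow, Real.exp_log (by positivity)]
  have hlog : Real.log (lam / r) ≤ lam / r - 1 :=
    Real.log_le_sub_one_of_pos (by positivity)
  have hexpo : (m : ℝ) * Real.log (lam / r) + L * (r - c * r) ≤ 0 := by
    have hcr : c * r = lam ^ 2 / r := by
      rw [hc]; field_simp
    have h2 : (m : ℝ) * Real.log (lam / r) ≤ (m : ℝ) * (lam / r - 1) := by
      apply mul_le_mul_of_nonneg_left hlog (by positivity)
    have h3 : (m : ℝ) * (lam / r - 1) + L * (r - lam ^ 2 / r) ≤ 0 := by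
      rw [← sub_nonneg]
      have key2 : 0 ≤ ((m : ℝ) * (r - lam) - L * (r ^ 2 - lam ^ 2)) / r := by
        apply div_nonneg _ hr0.le
        have h2Lr : 2 * L * r ≤ (m : ℝ) := by
          rw [hmR]
          rw [lt_div_iff₀ (by positivity)] at hrn
          linarith
        nlinarith [mul_nonneg (sub_nonneg.mpr hy1) (sub_nonneg.mpr h2Lr),
          mul_nonneg hL.le (sq_nonneg (r - lam))]
      have : ((m : ℝ) * (r - lam) - L * (r ^ 2 - lam ^ 2)) / r
          = 0 - ((m : ℝ) * (lam / r - 1) + L * (r - lam ^ 2 / r)) := by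
        field_simp; ring
      linarith [this ▸ key2]
    rw [hcr]; linarith
  have hfac : lam ^ m / r ^ m * Real.exp (L * (r - c * r)) ≤ 1 := by
    rw [hF, ← Real.exp_add]
    exact Real.exp_le_one_iff.mpr hexpo
  calc lam ^ m / r ^ m * w (c • y)
      ≤ lam ^ m / r ^ m * (w y * Real.exp (L * (r - c * r))) := by
        apply mul_le_mul_of_nonneg_left hwzle (by positivity)
    _ = (lam ^ m / r ^ m * Real.exp (L * (r - c * r))) * w y := by ring
    _ ≤ 1 * w y := mul_le_mul_of_nonneg_right hfac hwy.le
    _ = w y := one_mul _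
end

section
/- Let $n \geq 3$ and let $w: \bar B_R(0) \to (0,\infty)$ be continuous. Write $w$ in polar coordinates $w(r,\theta)$. Then the inequality $w_\lambda \leq w$ on $B_{\mu}(0) \setminus B_\lambda(0)$ for all $0 < \lambda < \mu$ (where $w_\lambda(y) = \frac{\lambda^{n-2}}{|y|^{n-2}} w(\frac{\lambda^2 y}{|y|^2})$ and $\mu \leq R$) holds if and only if $r^{\frac{n-2}{2}} w(r,\theta) \leq s^{\frac{n-2}{2}} w(s,\theta)$ for all $0 < r < s < \mu$ and all unit directions $\theta$. -/
open Metric Set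

private lemma kelvin_key (n : ℕ) (hn : 3 ≤ n) (lam r s : ℝ) (hr : 0 < r) (hs : 0 < s)
    (hlam : 0 < lam) (hsq : lam ^ 2 = r * s) :
    lam ^ (n - 2) / s ^ (n - 2)
      = r ^ (((n : ℝ) - 2) / 2) / s ^ (((n : ℝ) - 2) / 2) := by
  set p : ℝ := ((n : ℝ) - 2) / 2 with hp
  have hcast : ((n - 2 : ℕ) : ℝ) = (n : ℝ) - 2 := by
    have : (2 : ℕ) ≤ n := by omega
    push_cast [Nat.cast_sub this]
    ring
  have h2p : ((n - 2 : ℕ) : ℝ) = 2 * p := by rw [hcast, hp]; ring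
  have hlamr : lam ^ (n - 2) = r ^ p * s ^ p := by
    rw [← Real.rpow_natCast lam (n - 2), h2p, Real.rpow_mul hlam.le,
      Real.rpow_two, hsq, Real.mul_rpow hr.le hs.le]
  have hsr : s ^ (n - 2) = s ^ p * s ^ p := by
    rw [← Real.rpow_natCast s (n - 2), h2p, two_mul, Real.rpow_add hs]
  rw [hlamr, hsr, mul_div_mul_right _ _ (ne_of_gt (Real.rpow_pos_of_pos hs p))]

/-- the moving-spheres inequality `w_λ ≤ w` on `B_μ \ B_λ` for all
`0 < λ < μ` is equivalent to the monotonicity of `r ↦ r^{(n-2)/2} w(r,θ)` in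
polar coordinates. -/
theorem kelvin_iff_polar_monotone (n : ℕ) (hn : 3 ≤ n) (R μ : ℝ) (hR : 0 < R)
    (hμ : 0 < μ) (hμR : μ ≤ R)
    (w : EuclideanSpace ℝ (Fin n) → ℝ)
    (hw : ContinuousOn w (closedBall (0 : EuclideanSpace ℝ (Fin n)) R))
    (hpos : ∀ y ∈ closedBall (0 : EuclideanSpace ℝ (Fin n)) R, 0 < w y) :
    (∀ lam : ℝ, 0 < lam → lam < μ →
        ∀ y : EuclideanSpace ℝ (Fin n), lam ≤ ‖y‖ → ‖y‖ < μ →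
          (lam ^ (n - 2) / ‖y‖ ^ (n - 2)) * w ((lam ^ 2 / ‖y‖ ^ 2) • y) ≤ w y)
    ↔
    (∀ r s : ℝ, ∀ θ : EuclideanSpace ℝ (Fin n), ‖θ‖ = 1 →
        0 < r → r < s → s < μ →
          r ^ (((n : ℝ) - 2) / 2) * w (r • θ) ≤ s ^ (((n : ℝ) - 2) / 2) * w (s • θ)) := by
  set p : ℝ := ((n : ℝ) - 2) / 2 with hp
  constructor
  · intro H r s θ hθ hr hrs hsμ
    have hs : 0 < s := hr.trans hrs
    set lam : ℝ := Real.sqrt (r * s) with hlamdef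
    have hlam : 0 < lam := Real.sqrt_pos.mpr (by positivity)
    have hsq : lam ^ 2 = r * s := Real.sq_sqrt (by positivity)
    have hlams : lam < s := by
      have : lam < Real.sqrt (s * s) := by
        apply Real.sqrt_lt_sqrt (by positivity)
        exact mul_lt_mul_of_pos_right hrs hs
      rwa [Real.sqrt_mul_self hs.le] at this
    have hns : ‖s • θ‖ = s := by
      rw [norm_smul, hθ, Real.norm_eq_abs, abs_of_pos hs, mul_one]
    have h := H lam hlam (hlams.trans hsμ) (s • θ) (by rw [hns]; exact hlams.le)
      (by rw [hns]; exact hsμ)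
    rw [hns] at h
    have hsmul : (lam ^ 2 / s ^ 2) • (s • θ) = r • θ := by
      rw [hsq, smul_smul]
      congr 1
      field_simp
    rw [hsmul, kelvin_key n hn lam r s hr hs hlam hsq] at h
    rw [div_mul_eq_mul_div, div_le_iff₀ (Real.rpow_pos_of_pos hs p)] at h
    linarith [h]
  · intro H lam hlam hlamμ y hlamy hyμ
    set s : ℝ := ‖y‖ with hsdef
    have hs : 0 < s := lt_of_lt_of_le hlam hlamy
    rcases eq_or_lt_of_le hlamy with heq | hlt
    · rw [heq]
      rw [div_self (by positivity), div_self (by positivity), one_smul, one_mul]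
    · set θ : EuclideanSpace ℝ (Fin n) := s⁻¹ • y with hθdef
      have hθ : ‖θ‖ = 1 := by
        rw [hθdef, norm_smul, Real.norm_eq_abs, abs_of_pos (inv_pos.mpr hs), ← hsdef]
        field_simp
      set r : ℝ := lam ^ 2 / s with hrdef
      have hr : 0 < r := by positivity
      have hsq : lam ^ 2 = r * s := by rw [hrdef]; field_simp
      have hrs : r < s := by
        rw [hrdef, div_lt_iff₀ hs, ← sq]
        exact pow_lt_pow_left₀ hlt hlam.le (by norm_num)
      have h := H r s θ hθ hr hrs (lt_of_lt_of_le hyμ (le_refl μ))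
      have hsy : s • θ = y := by
        rw [hθdef, smul_smul]
        field_simp
        exact one_smul ℝ y
      have hry : r • θ = (lam ^ 2 / s ^ 2) • y := by
        rw [hθdef, smul_smul, hrdef]
        congr 1
        field_simp
      rw [← hry, kelvin_key n hn lam r s hr hs hlam hsq,
        div_mul_eq_mul_div, div_le_iff₀ (Real.rpow_pos_of_pos hs p)]
      calc r ^ p * w (r • θ) ≤ s ^ p * w (s • θ) := h
        _ = w y * s ^ p := by rw [hsy, mul_comm]
end

section
/- Let $n \geq 1$, $\nu > 0$, and let $f \in C^0(\mathbb{R}^n)$ satisfy: for every $x \in \mathbb{R}^n$, every $\lambda > 0$, and every $y$ with $|y - x| \geq \lambda$, one has $\big(\frac{\lambda}{|y-x|}\big)^\nu f\big(x + \frac{\lambda^2 (y-x)}{|y-x|^2}\big) \leq f(y)$. Then $f$ is constant. -/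
open Metric Set Filter

/-- if a continuous function satisfies the Kelvin-type inversion
inequality for all centers `x` and all radii `λ`, then it is constant. -/
theorem moving_spheres_constant (n : ℕ) (hn : 1 ≤ n) (ν : ℝ) (hν : 0 < ν)
    (f : EuclideanSpace ℝ (Fin n) → ℝ) (hf : Continuous f)
    (h : ∀ x : EuclideanSpace ℝ (Fin n), ∀ lam : ℝ, 0 < lam →
      ∀ y : EuclideanSpace ℝ (Fin n), lam ≤ ‖y - x‖ →
        (lam / ‖y - x‖) ^ ν * f (x + (lam ^ 2 / ‖y - x‖ ^ 2) • (y - x)) ≤ f y) :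
    ∃ c : ℝ, ∀ y, f y = c := by
  have key : ∀ a b : EuclideanSpace ℝ (Fin n), f a ≤ f b := by
    intro a b
    rcases eq_or_ne a b with rfl | hab
    · exact le_refl _
    set d : ℝ := ‖b - a‖ with hd
    have hd0 : 0 < d := by
      rw [hd, norm_pos_iff]
      exact sub_ne_zero.mpr (Ne.symm hab)
    have hineq : ∀ t : ℝ, 0 < t →
        (Real.sqrt (t / (t + d))) ^ ν * f a ≤ f b := by
      intro t ht
      have htd : 0 < t + d := by linarith
      set x : EuclideanSpace ℝ (Fin n) := a - (t / d) • (b - a) with hx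
      have hbx : b - x = (1 + t / d) • (b - a) := by
        rw [hx]; module
      have hcoef : (0:ℝ) < 1 + t / d := by positivity
      have hnorm : ‖b - x‖ = t + d := by
        rw [hbx, norm_smul, Real.norm_eq_abs, abs_of_pos hcoef, ← hd]
        field_simp
        ring
      set lam : ℝ := Real.sqrt (t * (t + d)) with hlam
      have hlam0 : 0 < lam := Real.sqrt_pos.mpr (by positivity)
      have hlamle : lam ≤ ‖b - x‖ := by
        rw [hnorm, hlam]
        calc Real.sqrt (t * (t + d)) ≤ Real.sqrt ((t + d) * (t + d)) :=
              Real.sqrt_le_sqrt (by nlinarith)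
          _ = t + d := Real.sqrt_mul_self htd.le
      have hmain := h x lam hlam0 b hlamle
      have hlamsq : lam ^ 2 = t * (t + d) := Real.sq_sqrt (by positivity)
      have harg : x + (lam ^ 2 / ‖b - x‖ ^ 2) • (b - x) = a := by
        rw [hnorm, hlamsq, hbx, hx, smul_smul]
        have : t * (t + d) / (t + d) ^ 2 * (1 + t / d) = t / d := by
          field_simp; ring
        rw [this]
        module
      rw [harg, hnorm] at hmain
      have hratio : lam / (t + d) = Real.sqrt (t / (t + d)) := by
        rw [hlam, Real.sqrt_div ht.le]
        rw [Real.sqrt_mul ht.le]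
        have h2 : Real.sqrt (t + d) ≠ 0 := by
          positivity
        rw [div_eq_div_iff htd.ne' h2]
        nlinarith [Real.mul_self_sqrt htd.le, Real.sqrt_nonneg t, Real.sqrt_nonneg (t+d)]
      rwa [hratio] at hmain
    -- now take the limit t → ∞
    have htend : Tendsto (fun t : ℝ => (Real.sqrt (t / (t + d))) ^ ν * f a)
        atTop (nhds (f a)) := by
      have h1 : Tendsto (fun t : ℝ => t / (t + d)) atTop (nhds 1) := by
        have h2 : Tendsto (fun t : ℝ => 1 - d / (t + d)) atTop (nhds 1) := by
          have h3 : Tendsto (fun t : ℝ => d / (t + d)) atTop (nhds 0) :=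
            Tendsto.div_atTop tendsto_const_nhds (tendsto_atTop_add_const_right _ d tendsto_id)
          simpa using tendsto_const_nhds.sub h3
        refine h2.congr' ?_
        filter_upwards [eventually_gt_atTop 0] with t ht
        have htd : t + d ≠ 0 := by positivity
        field_simp
        ring
      have h4 : Tendsto (fun t : ℝ => Real.sqrt (t / (t + d))) atTop (nhds 1) := by
        have := (Real.continuous_sqrt.continuousAt (x := (1:ℝ))).tendsto.comp h1
        simpa [Function.comp_def] using this
      have h5 : Tendsto (fun t : ℝ => (Real.sqrt (t / (t + d))) ^ ν) atTop (nhds 1) := by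
        have := h4.rpow_const (p := ν) (Or.inr hν.le)
        simpa using this
      simpa using h5.mul_const (f a)
    refine le_of_tendsto htend ?_
    filter_upwards [eventually_gt_atTop 0] with t ht using hineq t ht
  exact ⟨f 0, fun y => le_antisymm (key y 0) (key 0 y)⟩
end

section
/- Let $n \geq 1$, $\nu > 0$, and let $f \in C^0(\mathbb{R}^n \setminus \{0\})$ satisfy: for every $x \in \mathbb{R}^n$, every $0 < \lambda \leq |x|$, and every $y \in \mathbb{R}^n \setminus (B_\lambda(x) \cup \{0\})$, one has $\big(\frac{\lambda}{|y-x|}\big)^\nu f\big(x + \frac{\lambda^2 (y-x)}{|y-x|^2}\big) \leq f(y)$. Then $f$ is radially symmetric about the origin, i.e. $f(y)$ depends only on $|y|$, and the resulting function of $r = |y|$ is non-increasing on $(0,\infty)$. -/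
open Metric Set

set_option maxHeartbeats 1000000 in
/-- if a continuous function on `ℝⁿ \ {0}` satisfies the Kelvin-type
inversion inequality for all spheres not enclosing the origin, then it is radially
symmetric about the origin and non-increasing in the radius. -/
theorem moving_spheres_radial (n : ℕ) (hn : 1 ≤ n) (ν : ℝ) (hν : 0 < ν)
    (f : EuclideanSpace ℝ (Fin n) → ℝ)
    (hf : ContinuousOn f {y : EuclideanSpace ℝ (Fin n) | y ≠ 0})
    (h : ∀ x : EuclideanSpace ℝ (Fin n), ∀ lam : ℝ, 0 < lam → lam ≤ ‖x‖ →
      ∀ y : EuclideanSpace ℝ (Fin n), y ≠ 0 → lam ≤ ‖y - x‖ →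
        (lam / ‖y - x‖) ^ ν * f (x + (lam ^ 2 / ‖y - x‖ ^ 2) • (y - x)) ≤ f y) :
    ∃ g : ℝ → ℝ, (∀ y : EuclideanSpace ℝ (Fin n), y ≠ 0 → f y = g ‖y‖) ∧
      AntitoneOn g (Set.Ioi (0 : ℝ)) := by
  have key : ∀ a b : EuclideanSpace ℝ (Fin n), a ≠ 0 → b ≠ 0 → ‖a‖ ≤ ‖b‖ → f b ≤ f a := by
    intro a b ha hb hab
    rcases eq_or_ne a b with rfl | hne
    · exact le_refl _
    set d : ℝ := ‖b - a‖ with hd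
    have hd0 : 0 < d := by
      rw [hd]
      exact norm_sub_pos_iff.mpr (Ne.symm hne)
    have main : ∀ t : ℝ, 0 < t →
        (Real.sqrt (t * (t + d)) / (t + d)) ^ ν * f b ≤ f a := by
      intro t ht
      have htd : 0 < t + d := by linarith
      set x : EuclideanSpace ℝ (Fin n) := b + (t / d) • (b - a) with hx
      have hax : a - x = (-(1 + t / d)) • (b - a) := by
        rw [hx]; module
      have hna : ‖a - x‖ = t + d := by
        rw [hax, norm_smul, ← hd]
        rw [Real.norm_eq_abs, abs_neg, abs_of_pos (by positivity)]
        field_simp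
        ring
      set lam : ℝ := Real.sqrt (t * (t + d)) with hlam
      have hl0 : 0 < lam := Real.sqrt_pos.mpr (by positivity)
      have hl2 : lam ^ 2 = t * (t + d) := Real.sq_sqrt (by positivity)
      have hinner : 2 * (inner ℝ b (b - a) : ℝ) = ‖b‖ ^ 2 + d ^ 2 - ‖a‖ ^ 2 := by
        have h1 : ‖b - (b - a)‖ ^ 2 = ‖b‖ ^ 2 - 2 * (inner ℝ b (b - a) : ℝ) + ‖b - a‖ ^ 2 :=
          norm_sub_sq_real b (b - a)
        have h2 : b - (b - a) = a := by abel
        rw [h2] at h1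
        rw [← hd] at h1
        linarith
      have hxsq : ‖x‖ ^ 2 = ‖b‖ ^ 2 + 2 * ((t / d) * (inner ℝ b (b - a) : ℝ))
          + (t / d) ^ 2 * d ^ 2 := by
        rw [hx, norm_add_sq_real, real_inner_smul_right, norm_smul, ← hd]
        rw [Real.norm_eq_abs, abs_of_pos (by positivity)]
        ring
      have hxnorm : t * (t + d) ≤ ‖x‖ ^ 2 := by
        have hab2 : ‖a‖ ^ 2 ≤ ‖b‖ ^ 2 := by
          have := norm_nonneg a
          nlinarith
        have hb0 : (0:ℝ) ≤ ‖b‖ ^ 2 := by positivity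
        have ht' : 0 < t / d := by positivity
        rw [hxsq]
        have hiv : (inner ℝ b (b - a) : ℝ) = (‖b‖ ^ 2 + d ^ 2 - ‖a‖ ^ 2) / 2 := by
          linarith
        rw [hiv]
        have hdd : d ≠ 0 := ne_of_gt hd0
        have hexp : ‖b‖ ^ 2 + 2 * (t / d * ((‖b‖ ^ 2 + d ^ 2 - ‖a‖ ^ 2) / 2))
            + (t / d) ^ 2 * d ^ 2
            = ‖b‖ ^ 2 + (t / d) * (‖b‖ ^ 2 - ‖a‖ ^ 2) + t * d + t ^ 2 := by
          field_simp
          ring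
        rw [hexp]
        nlinarith [mul_nonneg ht'.le (sub_nonneg.mpr hab2)]
      have hlx : lam ≤ ‖x‖ := by
        have h1 : lam ≤ Real.sqrt (‖x‖ ^ 2) := Real.sqrt_le_sqrt hxnorm
        rwa [Real.sqrt_sq (norm_nonneg x)] at h1
      have hlay : lam ≤ ‖a - x‖ := by
        rw [hna, hlam]
        have h1 : t * (t + d) ≤ (t + d) ^ 2 := by nlinarith
        calc Real.sqrt (t * (t + d)) ≤ Real.sqrt ((t + d) ^ 2) := Real.sqrt_le_sqrt h1
          _ = t + d := Real.sqrt_sq htd.le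
      have hinv : x + (lam ^ 2 / ‖a - x‖ ^ 2) • (a - x) = b := by
        rw [hl2, hna, hax, smul_smul]
        have hc : t * (t + d) / (t + d) ^ 2 * (-(1 + t / d)) = -(t / d) := by
          field_simp
          ring
        rw [hc, hx]
        module
      have := h x lam hl0 hlx a ha hlay
      rwa [hinv, hna] at this
    -- limit as t → ∞
    have htend : Filter.Tendsto (fun t : ℝ => (Real.sqrt (t * (t + d)) / (t + d)) ^ ν * f b)
        Filter.atTop (nhds (f b)) := by
      have h2 : Filter.Tendsto (fun t : ℝ => t + d) Filter.atTop Filter.atTop :=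
        Filter.tendsto_atTop_add_const_right _ d Filter.tendsto_id
      have h3 : Filter.Tendsto (fun t : ℝ => d * (t + d)⁻¹) Filter.atTop (nhds 0) := by
        have := h2.inv_tendsto_atTop.const_mul d
        simpa using this
      have h1 : Filter.Tendsto (fun t : ℝ => t / (t + d)) Filter.atTop (nhds 1) := by
        have h4 : Filter.Tendsto (fun t : ℝ => 1 - d * (t + d)⁻¹) Filter.atTop (nhds 1) := by
          have := (tendsto_const_nhds (x := (1:ℝ)) (f := Filter.atTop)).sub h3
          simpa using this
        refine h4.congr' ?_
        filter_upwards [Filter.eventually_gt_atTop (0:ℝ)] with t ht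
        have : t + d ≠ 0 := by positivity
        field_simp
        ring
      have h5 : Filter.Tendsto (fun t : ℝ => Real.sqrt (t / (t + d))) Filter.atTop (nhds 1) := by
        have := (Real.continuous_sqrt.tendsto 1).comp h1
        simpa [Function.comp_def] using this
      have h6 : Filter.Tendsto (fun t : ℝ => Real.sqrt (t * (t + d)) / (t + d))
          Filter.atTop (nhds 1) := by
        refine h5.congr' ?_
        filter_upwards [Filter.eventually_gt_atTop (0:ℝ)] with t ht
        have htd2 : 0 < t + d := by linarith
        have e1 : t * (t + d) = (t / (t + d)) * (t + d) ^ 2 := by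
          field_simp
        rw [e1, Real.sqrt_mul (by positivity), Real.sqrt_sq htd2.le, mul_div_assoc,
          div_self (ne_of_gt htd2), mul_one]
      have h7 : Filter.Tendsto (fun t : ℝ => (Real.sqrt (t * (t + d)) / (t + d)) ^ ν)
          Filter.atTop (nhds 1) := by
        have := h6.rpow_const (p := ν) (Or.inl one_ne_zero)
        simpa using this
      have := h7.mul_const (f b)
      simpa using this
    refine le_of_tendsto htend ?_
    filter_upwards [Filter.eventually_gt_atTop (0:ℝ)] with t ht
    exact main t ht
  -- build g
  haveI : Nonempty (Fin n) := ⟨⟨0, hn⟩⟩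
  obtain ⟨e, he⟩ : ∃ e : EuclideanSpace ℝ (Fin n), ‖e‖ = 1 := by
    exact exists_norm_eq _ (by norm_num : (0:ℝ) ≤ 1)
  have hre : ∀ r : ℝ, 0 < r → ‖r • e‖ = r := by
    intro r hr
    rw [norm_smul, Real.norm_eq_abs, abs_of_pos hr, he, mul_one]
  have hne0 : ∀ r : ℝ, 0 < r → r • e ≠ 0 := by
    intro r hr
    intro hc
    have := hre r hr
    rw [hc, norm_zero] at this
    linarith
  refine ⟨fun r => f (r • e), ?_, ?_⟩
  · intro y hy
    have hy0 : 0 < ‖y‖ := norm_pos_iff.mpr hy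
    have h1 : ‖(‖y‖ • e)‖ = ‖y‖ := hre _ hy0
    have h2 := key y (‖y‖ • e) hy (hne0 _ hy0) (by rw [h1])
    have h3 := key (‖y‖ • e) y (hne0 _ hy0) hy (by rw [h1])
    linarith
  · intro r hr s hs hrs
    exact key (r • e) (s • e) (hne0 _ hr) (hne0 _ hs)
      (by rw [hre r hr, hre s hs]; exact hrs)
end

section
/- Let $n \geq 3$ and suppose $v \in C^0(\mathbb{R}^n)$, $v > 0$, satisfies: for every $x \in \mathbb{R}^n$ and every $\lambda > 0$, $v_{x,\lambda}(y) := \frac{\lambda^{n-2}}{|y-x|^{n-2}} v\big(x + \frac{\lambda^2(y-x)}{|y-x|^2}\big) \leq v(y)$ for all $|y - x| \geq \lambda$. Then for every fixed $x$ and unit vector $e$, the function $r \mapsto r^{\frac{n-2}{2}} v(x + re)$ is non-decreasing in $r > 0$; consequently $\liminf_{|y| \to \infty} |y|^{n-2} v(y) = \infty$ unless $v$ is constant, and in fact $v$ must be constant. -/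
open Metric Set Filter Topology

/-- if the Kelvin transform inequality `v_{x,λ} ≤ v` outside `B_λ(x)`
holds for every center `x` and every radius `λ > 0`, then along every ray
`r ↦ r^{(n-2)/2} v(x + re)` is non-decreasing; consequently
`liminf_{|y|→∞} |y|^{n-2} v(y) = ∞` unless `v` is constant, and in fact `v` is
constant. -/
theorem all_spheres_implies_constant (n : ℕ) (hn : 3 ≤ n)
    (v : EuclideanSpace ℝ (Fin n) → ℝ) (hv : Continuous v) (hpos : ∀ x, 0 < v x)
    (h : ∀ x : EuclideanSpace ℝ (Fin n), ∀ lam : ℝ, 0 < lam →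
      ∀ y : EuclideanSpace ℝ (Fin n), lam ≤ ‖y - x‖ →
        (lam ^ (n - 2) / ‖y - x‖ ^ (n - 2)) *
            v (x + (lam ^ 2 / ‖y - x‖ ^ 2) • (y - x)) ≤ v y) :
    (∀ x e : EuclideanSpace ℝ (Fin n), ‖e‖ = 1 →
        ∀ r s : ℝ, 0 < r → r ≤ s →
          r ^ (((n : ℝ) - 2) / 2) * v (x + r • e) ≤ s ^ (((n : ℝ) - 2) / 2) * v (x + s • e)) ∧
    ((¬ ∃ c : ℝ, ∀ y, v y = c) →
        Tendsto (fun y : EuclideanSpace ℝ (Fin n) => ‖y‖ ^ (n - 2) * v y)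
          (Bornology.cobounded _) atTop) ∧
    (∃ c : ℝ, ∀ y, v y = c) := by
  have key : ∀ z y : EuclideanSpace ℝ (Fin n), v z ≤ v y := by
    intro z y
    rcases eq_or_ne y z with rfl | hne
    · exact le_refl _
    have hd : 0 < ‖y - z‖ := norm_sub_pos_iff.mpr hne
    set d := ‖y - z‖ with hdd
    have hineq : ∀ t : ℝ, 0 < t →
        Real.sqrt (t / (t + d)) ^ (n - 2) * v z ≤ v y := by
      intro t ht
      have htd : 0 < t + d := by linarith
      set x := z + (t / d) • (z - y) with hx
      have hyx : y - x = ((t + d) / d) • (y - z) := by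
        rw [hx]
        have hds : (t + d) / d = t / d + 1 := by field_simp
        rw [hds]
        module
      have hnyx : ‖y - x‖ = t + d := by
        rw [hyx, norm_smul, Real.norm_eq_abs, ← hdd,
          abs_of_pos (by positivity), div_mul_cancel₀ _ hd.ne']
      set lam := Real.sqrt (t * (t + d)) with hlamdef
      have hlam : 0 < lam := Real.sqrt_pos.mpr (by positivity)
      have hlam2 : lam ^ 2 = t * (t + d) := Real.sq_sqrt (by positivity)
      have hlamle : lam ≤ ‖y - x‖ := by
        rw [hnyx, hlamdef]
        calc Real.sqrt (t * (t + d)) ≤ Real.sqrt ((t + d) * (t + d)) :=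
              Real.sqrt_le_sqrt (by nlinarith)
          _ = t + d := Real.sqrt_mul_self htd.le
      have H := h x lam hlam y hlamle
      have harg : x + (lam ^ 2 / ‖y - x‖ ^ 2) • (y - x) = z := by
        rw [hlam2, hnyx, hyx, hx]
        match_scalars <;> field_simp <;> ring
      rw [harg, hnyx] at H
      have hco : Real.sqrt (t / (t + d)) = lam / (t + d) := by
        have h1 : t / (t + d) = (t * (t + d)) / (t + d) ^ 2 := by
          field_simp
        rw [h1, Real.sqrt_div (by positivity), Real.sqrt_sq htd.le, hlamdef]
      rw [hco, div_pow]
      exact H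
    have hlim : Tendsto (fun t : ℝ => Real.sqrt (t / (t + d)) ^ (n - 2) * v z)
        atTop (𝓝 (v z)) := by
      have h0 : Tendsto (fun t : ℝ => d / (t + d)) atTop (𝓝 0) :=
        tendsto_const_nhds.div_atTop (tendsto_atTop_add_const_right atTop d tendsto_id)
      have h1 : Tendsto (fun t : ℝ => t / (t + d)) atTop (𝓝 1) := by
        have h2 : Tendsto (fun t : ℝ => 1 - d / (t + d)) atTop (𝓝 1) := by
          simpa using tendsto_const_nhds.sub h0
        refine h2.congr' ?_
        filter_upwards [eventually_gt_atTop (0:ℝ)] with t ht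
        have : t + d ≠ 0 := by positivity
        field_simp
        ring
      have h3 : Tendsto (fun t : ℝ => Real.sqrt (t / (t + d))) atTop (𝓝 1) := by
        have := (Real.continuous_sqrt.tendsto 1).comp h1
        simpa [Function.comp_def] using this
      have h4 := (h3.pow (n - 2)).mul_const (v z)
      simpa using h4
    refine le_of_tendsto hlim ?_
    filter_upwards [eventually_gt_atTop (0:ℝ)] with t ht using hineq t ht
  have hconst : ∃ c : ℝ, ∀ y, v y = c :=
    ⟨v 0, fun y => le_antisymm (key y 0) (key 0 y)⟩
  obtain ⟨c, hc⟩ := hconst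
  refine ⟨?_, ?_, ⟨c, hc⟩⟩
  · intro x e he r s hr hrs
    rw [hc (x + r • e), hc (x + s • e)]
    have hcpos : 0 < c := hc 0 ▸ hpos 0
    have hexp : (0:ℝ) ≤ ((n : ℝ) - 2) / 2 := by
      have : (3:ℝ) ≤ (n : ℝ) := by exact_mod_cast hn
      linarith
    exact mul_le_mul_of_nonneg_right (Real.rpow_le_rpow hr.le hrs hexp) hcpos.le
  · intro hne
    exact absurd ⟨c, hc⟩ hne
end

section
/- Let $\Gamma_k \subset \mathbb{R}^n$ denote the connected component of $\{\lambda \in \mathbb{R}^n : \sigma_k(\lambda) > 0\}$ containing the positive cone $\Gamma_n = \{\lambda : \lambda_i > 0 \ \forall i\}$, where $\sigma_k$ is the $k$-th elementary symmetric polynomial. Then $\Gamma_k = \{\lambda \in \mathbb{R}^n : \sigma_l(\lambda) > 0 \text{ for all } 1 \leq l \leq k\}$. -/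
open Set

/-- The `k`-th elementary symmetric function of `x : Fin n → ℝ`. -/
noncomputable def esymm (n k : ℕ) (x : Fin n → ℝ) : ℝ :=
  ∑ s ∈ Finset.univ.powersetCard k, ∏ i ∈ s, x i

namespace GammaAux

open Polynomial

/-- The polynomial `∏ (X + xᵢ)`. -/
noncomputable def P (n : ℕ) (x : Fin n → ℝ) : ℝ[X] := ∏ i, (X + C (x i))

lemma P_natDegree (n : ℕ) (x : Fin n → ℝ) : (P n x).natDegree = n := by
  rw [P, natDegree_prod_of_monic _ _ fun i _ => monic_X_add_C _]
  simp [natDegree_X_add_C]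

lemma P_coeff (n : ℕ) (x : Fin n → ℝ) {l : ℕ} (hl : l ≤ n) :
    (P n x).coeff (n - l) = esymm n l x := by
  have h1 : n - l ≤ (Finset.univ : Finset (Fin n)).card := by
    simp only [Finset.card_univ, Fintype.card_fin]; omega
  rw [P, Finset.prod_X_add_C_coeff _ _ h1]
  have h : (Finset.univ : Finset (Fin n)).card - (n - l) = l := by
    simp only [Finset.card_univ, Fintype.card_fin]; omega
  rw [h]; rfl

lemma esymm_zero_eq (n : ℕ) (x : Fin n → ℝ) : esymm n 0 x = 1 := by
  simp [esymm]

lemma P_splits (n : ℕ) (x : Fin n → ℝ) : (P n x).Splits := by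
  refine Splits.prod fun i _ => ?_
  have : X + C (x i) = X - C (-(x i)) := by rw [map_neg, sub_neg_eq_add]
  rw [this]; exact Splits.X_sub_C _

lemma deriv_card (p : ℝ[X]) (h : Multiset.card p.roots = p.natDegree) :
    Multiset.card (derivative p).roots = (derivative p).natDegree := by
  rcases Nat.eq_zero_or_pos p.natDegree with h0 | h0
  · obtain ⟨a, rfl⟩ := natDegree_eq_zero.mp h0
    simp
  · have hd : (derivative p).natDegree = p.natDegree - 1 :=
      natDegree_eq_of_degree_eq_some (degree_derivative_eq p h0)
    have h1 : Multiset.card (derivative p).roots ≤ p.natDegree - 1 := hd ▸ card_roots' _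
    have h2 := card_roots_le_derivative p
    omega

lemma iter_deriv (n : ℕ) (x : Fin n → ℝ) :
    ∀ j, j ≤ n → (derivative^[j] (P n x)).natDegree = n - j ∧
      Multiset.card (derivative^[j] (P n x)).roots = n - j := by
  intro j
  induction j with
  | zero =>
    intro _
    refine ⟨by simpa using P_natDegree n x, ?_⟩
    have := splits_iff_card_roots.mp (P_splits n x)
    simpa [P_natDegree] using this
  | succ j ih =>
    intro hj
    obtain ⟨ih1, ih2⟩ := ih (by omega)
    rw [Function.iterate_succ_apply']
    have hpos : 0 < (derivative^[j] (P n x)).natDegree := by omega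
    have hd : (derivative (derivative^[j] (P n x))).natDegree = n - j - 1 :=
      ih1 ▸ natDegree_eq_of_degree_eq_some (degree_derivative_eq _ hpos)
    constructor
    · rw [hd]; omega
    · rw [deriv_card _ (ih2.trans ih1.symm), hd]; omega

lemma q_coeff (n k : ℕ) (hkn : k ≤ n) (x : Fin n → ℝ) {m : ℕ} (hm : m ≤ k) :
    (derivative^[n - k] (P n x)).coeff m =
      ((m + (n - k)).descFactorial (n - k) : ℝ) * esymm n (k - m) x := by
  rw [coeff_iterate_derivative, nsmul_eq_mul]
  congr 1
  have h : m + (n - k) = n - (k - m) := by omega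
  rw [h, P_coeff n x (by omega)]

lemma q_eval_pos (n k : ℕ) (hk1 : 1 ≤ k) (hkn : k ≤ n) (x : Fin n → ℝ)
    (hx : ∀ l, 1 ≤ l → l ≤ k → 0 ≤ esymm n l x) (hxk : 0 < esymm n k x)
    {t : ℝ} (ht : 0 ≤ t) : 0 < (derivative^[n - k] (P n x)).eval t := by
  have hdeg : (derivative^[n - k] (P n x)).natDegree = k := by
    have := (iter_deriv n x (n - k) (by omega)).1
    rwa [Nat.sub_sub_self hkn] at this
  rw [eval_eq_sum_range' (n := k + 1) (by omega) t]
  apply Finset.sum_pos'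
  · intro m hm
    rw [Finset.mem_range] at hm
    rw [q_coeff n k hkn x (by omega)]
    have he : 0 ≤ esymm n (k - m) x := by
      rcases Nat.eq_zero_or_pos (k - m) with h0 | h0
      · rw [h0, esymm_zero_eq]; norm_num
      · exact hx _ h0 (by omega)
    positivity
  · refine ⟨0, by simp, ?_⟩
    rw [q_coeff n k hkn x (Nat.zero_le k)]
    have hc : 0 < (0 + (n - k)).descFactorial (n - k) := by
      have := Nat.descFactorial_eq_zero_iff_lt (n := 0 + (n - k)) (k := n - k)
      omega
    have hc' : (0 : ℝ) < ((0 + (n - k)).descFactorial (n - k) : ℝ) := by exact_mod_cast hc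
    have h0 : (0:ℝ) < ((0 + (n - k)).descFactorial (n - k) : ℝ) * esymm n (k - 0) x * t ^ 0 := by
      rw [pow_zero, mul_one, Nat.sub_zero]
      exact mul_pos hc' hxk
    exact h0

lemma ms_prod_pos (s : Multiset ℝ) (h : ∀ r ∈ s, 0 < r) : 0 < s.prod := by
  induction s using Multiset.induction with
  | empty => simp
  | cons a s ih =>
    rw [Multiset.prod_cons]
    exact mul_pos (h a (Multiset.mem_cons_self a s))
      (ih fun r hr => h r (Multiset.mem_cons_of_mem hr))

lemma ms_sum_pos (s : Multiset ℝ) (h : ∀ r ∈ s, 0 < r) (hs : s ≠ 0) : 0 < s.sum := by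
  induction s using Multiset.induction with
  | empty => exact absurd rfl hs
  | cons a s ih =>
    rw [Multiset.sum_cons]
    have ha := h a (Multiset.mem_cons_self a s)
    have hsum : 0 ≤ s.sum :=
      Multiset.sum_nonneg fun r hr => (h r (Multiset.mem_cons_of_mem hr)).le
    linarith

lemma ms_esymm_pos (s : Multiset ℝ) (h : ∀ r ∈ s, 0 < r) {l : ℕ}
    (hl : l ≤ Multiset.card s) : 0 < s.esymm l := by
  apply ms_sum_pos
  · intro r hr
    obtain ⟨t, ht, rfl⟩ := Multiset.mem_map.mp hr
    obtain ⟨hts, _⟩ := Multiset.mem_powersetCard.mp ht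
    exact ms_prod_pos t fun r hr => h r (Multiset.mem_of_le hts hr)
  · intro h0
    have := congrArg Multiset.card h0
    rw [Multiset.card_map, Multiset.card_powersetCard] at this
    simp only [Multiset.card_zero] at this
    exact Nat.choose_pos hl |>.ne' this

/-- The key boundary lemma: if `σ_l ≥ 0` for `1 ≤ l ≤ k` and `σ_k > 0`, then
`σ_l > 0` for all `1 ≤ l ≤ k`. -/
lemma boundary (n k : ℕ) (hk1 : 1 ≤ k) (hkn : k ≤ n) (x : Fin n → ℝ)
    (hx : ∀ l, 1 ≤ l → l ≤ k → 0 ≤ esymm n l x) (hxk : 0 < esymm n k x) :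
    ∀ l, 1 ≤ l → l ≤ k → 0 < esymm n l x := by
  set q := derivative^[n - k] (P n x) with hq
  have hdeg : q.natDegree = k := by
    have := (iter_deriv n x (n - k) (by omega)).1
    rwa [Nat.sub_sub_self hkn] at this
  have hcard : Multiset.card q.roots = q.natDegree := by
    have := (iter_deriv n x (n - k) (by omega)).2
    rw [Nat.sub_sub_self hkn] at this
    rw [this, hdeg]
  have hq0 : q ≠ 0 := fun h0 => by simp [h0] at hdeg; omega
  have hroots : ∀ r ∈ q.roots, r < 0 := by
    intro r hr
    by_contra hrn
    push_neg at hrn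
    have heval : q.eval r = 0 := (mem_roots hq0).mp hr
    exact (q_eval_pos n k hk1 hkn x hx hxk hrn).ne' heval
  have hlead : 0 < q.leadingCoeff := by
    rw [Polynomial.leadingCoeff, hdeg, q_coeff n k hkn x le_rfl]
    rw [Nat.sub_self, esymm_zero_eq, mul_one]
    have hc : 0 < (k + (n - k)).descFactorial (n - k) := by
      have := Nat.descFactorial_eq_zero_iff_lt (n := k + (n - k)) (k := n - k)
      omega
    exact_mod_cast hc
  intro l hl1 hlk
  have hco := coeff_eq_esymm_roots_of_card hcard (show k - l ≤ q.natDegree by omega)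
  rw [hdeg] at hco
  have hkl : k - (k - l) = l := by omega
  rw [hkl] at hco
  have hesym : q.roots.esymm l = (-1 : ℝ) ^ l * (q.roots.map Neg.neg).esymm l := by
    rw [Multiset.esymm_neg, ← mul_assoc, ← mul_pow, neg_mul_neg, one_mul, one_pow, one_mul]
  have hpos : 0 < (q.roots.map Neg.neg).esymm l := by
    refine ms_esymm_pos _ ?_ (by rw [Multiset.card_map, hcard, hdeg]; omega)
    intro r hr
    obtain ⟨a, ha, rfl⟩ := Multiset.mem_map.mp hr
    simpa using hroots a ha
  have h1 : 0 < q.coeff (k - l) := by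
    have hsq : ((-1:ℝ) ^ l) * ((-1:ℝ) ^ l) = 1 := by
      rw [← mul_pow]; norm_num
    have hre : q.leadingCoeff * (-1:ℝ) ^ l *
        ((-1:ℝ) ^ l * (Multiset.map Neg.neg q.roots).esymm l) =
        q.leadingCoeff * (((-1:ℝ) ^ l * (-1:ℝ) ^ l) *
          (Multiset.map Neg.neg q.roots).esymm l) := by ring
    rw [hco, hesym, hre, hsq, one_mul]
    exact mul_pos hlead hpos
  rw [q_coeff n k hkn x (by omega), hkl] at h1
  have hc : (0 : ℝ) < ((k - l + (n - k)).descFactorial (n - k) : ℝ) := by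
    have := Nat.descFactorial_eq_zero_iff_lt (n := k - l + (n - k)) (k := n - k)
    have h2 : 0 < (k - l + (n - k)).descFactorial (n - k) := by omega
    exact_mod_cast h2
  nlinarith

lemma shift (n l : ℕ) (hl : l ≤ n) (x : Fin n → ℝ) (t : ℝ) :
    esymm n l (fun i => x i + t) = ((hasseDeriv (n - l)) (P n x)).eval t := by
  have h1 : P n (fun i => x i + t) = (taylor t) (P n x) := by
    rw [taylor_apply, P, P, Polynomial.prod_comp]
    refine Finset.prod_congr rfl fun i _ => ?_
    rw [add_comp, X_comp, C_comp, map_add]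
    ring
  rw [← P_coeff n _ hl, h1, taylor_coeff]

lemma ray_pos (n l : ℕ) (hl1 : 1 ≤ l) (hln : l ≤ n) (x : Fin n → ℝ)
    (hx : ∀ j, 1 ≤ j → j ≤ l → 0 < esymm n j x) {t : ℝ} (ht : 0 ≤ t) :
    0 < esymm n l (fun i => x i + t) := by
  rw [shift n l hln x t]
  have hdle : ((hasseDeriv (n - l)) (P n x)).natDegree < l + 1 := by
    have h1 := natDegree_hasseDeriv_le (P n x) (n - l)
    rw [P_natDegree] at h1
    omega
  rw [eval_eq_sum_range' hdle]
  apply Finset.sum_pos'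
  · intro m hm
    rw [Finset.mem_range] at hm
    rw [hasseDeriv_coeff]
    have h : m + (n - l) = n - (l - m) := by omega
    rw [h, P_coeff n x (l := l - m) (by omega)]
    have he : 0 ≤ esymm n (l - m) x := by
      rcases Nat.eq_zero_or_pos (l - m) with h0 | h0
      · rw [h0, esymm_zero_eq]; norm_num
      · exact (hx _ h0 (by omega)).le
    positivity
  · refine ⟨0, by simp, ?_⟩
    rw [hasseDeriv_coeff]
    have h : 0 + (n - l) = n - l := Nat.zero_add _
    rw [h, P_coeff n x (l := l) hln, Nat.choose_self]
    simpa using hx l hl1 le_rfl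

lemma smul_esymm (n l : ℕ) (c : ℝ) (x : Fin n → ℝ) :
    esymm n l (fun i => c * x i) = c ^ l * esymm n l x := by
  unfold esymm
  rw [Finset.mul_sum]
  refine Finset.sum_congr rfl fun s hs => ?_
  rw [Finset.prod_mul_distrib, Finset.prod_const, (Finset.mem_powersetCard.mp hs).2]

lemma esymm_one (n l : ℕ) : esymm n l (fun _ => (1 : ℝ)) = (n.choose l : ℝ) := by
  unfold esymm
  simp [Finset.card_powersetCard]

lemma cont (n l : ℕ) : Continuous (esymm n l) := by
  unfold esymm
  exact continuous_finset_sum _ fun s _ => continuous_finset_prod _ fun i _ => continuous_apply i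

end GammaAux

/-- the connected component of `{σ_k > 0}` containing the positive
cone is exactly `{σ_l > 0 for all 1 ≤ l ≤ k}`. -/
theorem gamma_k_characterization (n k : ℕ) (hn : 1 ≤ n) (hk1 : 1 ≤ k) (hkn : k ≤ n) :
    connectedComponentIn {x : Fin n → ℝ | 0 < esymm n k x} (fun _ => 1) =
      {x : Fin n → ℝ | ∀ l : ℕ, 1 ≤ l → l ≤ k → 0 < esymm n l x} := by
  set S : Set (Fin n → ℝ) := {x | 0 < esymm n k x} with hSdef
  set T : Set (Fin n → ℝ) := {x | ∀ l : ℕ, 1 ≤ l → l ≤ k → 0 < esymm n l x} with hTdef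
  have hone : (fun _ => (1 : ℝ)) ∈ T := by
    intro l hl1 hlk
    rw [GammaAux.esymm_one n l]
    exact_mod_cast Nat.choose_pos (hlk.trans hkn)
  have hTS : T ⊆ S := fun x hx => hx k hk1 le_rfl
  have hTpre : IsPreconnected T := by
    have hTeq : T = ⋃₀ ((fun y => segment ℝ (fun _ => (1 : ℝ)) y) '' T) := by
      ext z
      constructor
      · intro hz
        exact ⟨_, ⟨z, hz, rfl⟩, right_mem_segment ℝ _ _⟩
      · rintro ⟨_, ⟨y, hy, rfl⟩, hz⟩
        obtain ⟨a, b, ha, hb, hab, rfl⟩ := hz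
        rcases eq_or_lt_of_le hb with hb0 | hb0
        · have ha1 : a = 1 := by rw [← hb0] at hab; linarith
          have : (a • (fun _ : Fin n => (1 : ℝ)) + b • y) = fun _ => (1 : ℝ) := by
            funext i; simp [← hb0, ha1]
          rw [this]; exact hone
        · intro l hl1 hlk
          have heq : (a • (fun _ : Fin n => (1 : ℝ)) + b • y) =
              fun i => b * (y i + a / b) := by
            funext i
            simp only [Pi.add_apply, Pi.smul_apply, smul_eq_mul, mul_one]
            field_simp
            ring
          rw [heq, GammaAux.smul_esymm]
          exact mul_pos (pow_pos hb0 l)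
            (GammaAux.ray_pos n l hl1 (hlk.trans hkn) y
              (fun j hj1 hjl => hy j hj1 (hjl.trans hlk)) (div_nonneg ha hb0.le))
    rw [hTeq]
    refine isPreconnected_sUnion (fun _ => (1 : ℝ)) _ ?_ ?_
    · rintro s ⟨y, _, rfl⟩
      exact left_mem_segment ℝ _ _
    · rintro s ⟨y, _, rfl⟩
      exact (convex_segment _ _).isPreconnected
  apply Set.Subset.antisymm
  · set V : Set (Fin n → ℝ) := {x | ∃ l : ℕ, 1 ≤ l ∧ l ≤ k ∧ esymm n l x < 0} with hVdef
    have hTopen : IsOpen T := by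
      have : T = ⋂ l ∈ Finset.Icc 1 k, {x : Fin n → ℝ | 0 < esymm n l x} := by
        ext x
        simp only [hTdef, mem_setOf_eq, mem_iInter, Finset.mem_Icc]
        constructor
        · rintro h l ⟨h1, h2⟩; exact h l h1 h2
        · intro h l h1 h2; exact h l ⟨h1, h2⟩
      rw [this]
      exact isOpen_biInter_finset fun l _ =>
        isOpen_lt continuous_const (GammaAux.cont n l)
    have hVopen : IsOpen V := by
      have : V = ⋃ l ∈ Finset.Icc 1 k, {x : Fin n → ℝ | esymm n l x < 0} := by
        ext x
        simp only [hVdef, mem_setOf_eq, mem_iUnion, Finset.mem_Icc]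
        constructor
        · rintro ⟨l, h1, h2, h3⟩; exact ⟨l, ⟨h1, h2⟩, h3⟩
        · rintro ⟨l, ⟨h1, h2⟩, h3⟩; exact ⟨l, h1, h2, h3⟩
      rw [this]
      exact isOpen_biUnion fun l _ => isOpen_lt (GammaAux.cont n l) continuous_const
    have hdisj : Disjoint T V := by
      rw [Set.disjoint_left]
      rintro x hx ⟨l, h1, h2, h3⟩
      exact absurd (hx l h1 h2) (not_lt.mpr h3.le)
    have hsub : connectedComponentIn S (fun _ => 1) ⊆ T ∪ V := by
      intro x hx
      have hxS : x ∈ S := connectedComponentIn_subset _ _ hx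
      by_cases hcase : ∀ l : ℕ, 1 ≤ l → l ≤ k → 0 ≤ esymm n l x
      · exact Or.inl (GammaAux.boundary n k hk1 hkn x hcase hxS)
      · push_neg at hcase
        obtain ⟨l, h1, h2, h3⟩ := hcase
        exact Or.inr ⟨l, h1, h2, h3⟩
    exact IsPreconnected.subset_left_of_subset_union hTopen hVopen hdisj hsub
      ⟨_, mem_connectedComponentIn (hTS hone), hone⟩ isPreconnected_connectedComponentIn
  · exact hTpre.subset_connectedComponentIn hone hTS
end
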